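/- Let φ : ℝ → [0,∞) be an even, nonnegative Schwartz function whose Fourier transform φ̂ is supported in [−1,1]. Set W_t(λ) := φ(√λ · t) and W*_t(λ) := Σ_{n∈ℤ} φ((arccos(1 − λ/2) − 2πn)·t). Then for every integer l ≥ 0 there is a constant C_l > 0 such that for all t ≥ 1 and all λ ∈ [0,4], |W*_t(λ) − W_t(λ)| ≤ C_l · t^{−1} · (1 + t²λ)^{−l}. In particular, for each fixed λ ≥ 0, W*_t(λ/t²) → φ(√λ) as t → ∞. -/

import Mathlib

set_option maxHeartbeats 1000000


open MeasureTheory Real Filter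

/-- The Fourier transform with the convention `φ̂(k) = (2π)⁻¹ ∫ φ(x) e^{−i k x} dx`. -/
noncomputable def fourierHat (f : ℝ → ℝ) (k : ℝ) : ℂ :=
  (2 * Real.pi : ℂ)⁻¹ * ∫ x : ℝ, (f x : ℂ) * Complex.exp (-(Complex.I * k * x))

/-- Polynomial decay bound for a Schwartz function, with `(1 + |x|)` weights. -/
lemma schwartz_decay_bound (f : SchwartzMap ℝ ℝ) (k : ℕ) :
    ∃ C : ℝ, 0 < C ∧ ∀ x : ℝ, (1 + |x|) ^ k * |f x| ≤ C := by
  refine ⟨2 ^ k * (Finset.Iic (k, 0)).sup (fun m => SchwartzMap.seminorm ℝ m.1 m.2) f + 1,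
    by positivity, fun x => ?_⟩
  have h := SchwartzMap.one_add_le_sup_seminorm_apply (𝕜 := ℝ) (m := (k, 0))
    le_rfl le_rfl f x
  simp only [norm_iteratedFDeriv_zero, Real.norm_eq_abs] at h
  linarith

/-- `x - sin x ≤ x³/2` on `[0, π/2]`. -/
lemma sub_sin_le_cube (x : ℝ) (hx : 0 ≤ x) (hx2 : x ≤ π / 2) :
    x - Real.sin x ≤ x ^ 3 / 2 := by
  have hcos : 1 - Real.cos x ≤ x ^ 2 / 2 := by
    have h1 : Real.cos x = 1 - 2 * Real.sin (x / 2) ^ 2 := by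
      have h2 := Real.cos_two_mul (x / 2)
      have h3 := Real.sin_sq_add_cos_sq (x / 2)
      have h4 : 2 * (x / 2) = x := by ring
      rw [h4] at h2; nlinarith
    have h5 : 0 ≤ Real.sin (x / 2) := Real.sin_nonneg_of_nonneg_of_le_pi (by linarith)
      (by nlinarith [Real.pi_pos])
    have h6 : Real.sin (x / 2) ≤ x / 2 := Real.sin_le (by linarith)
    nlinarith [mul_self_le_mul_self h5 h6]
  -- mean value theorem for g y = y - sin y on [0, x]
  have hmvt : ∀ y ∈ Set.Icc (0 : ℝ) x, ‖deriv (fun z : ℝ => z - Real.sin z) y‖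
      ≤ 1 - Real.cos x := by
    intro y hy
    have hd : deriv (fun z : ℝ => z - Real.sin z) y = 1 - Real.cos y := by
      have := ((hasDerivAt_id y).sub (Real.hasDerivAt_sin y)).deriv
      simpa using this
    rw [hd, Real.norm_eq_abs, abs_of_nonneg (by nlinarith [Real.cos_le_one y])]
    have := Real.cos_le_cos_of_nonneg_of_le_pi hy.1 (by linarith [Real.pi_pos]) hy.2
    linarith
  have hdiff : ∀ y ∈ Set.Icc (0 : ℝ) x,
      DifferentiableAt ℝ (fun z : ℝ => z - Real.sin z) y := fun y _ =>
    (differentiable_id.sub Real.differentiable_sin) y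
  have h := (convex_Icc (0 : ℝ) x).norm_image_sub_le_of_norm_deriv_le hdiff hmvt
    (Set.left_mem_Icc.2 hx) (Set.right_mem_Icc.2 hx)
  simp only [Real.sin_zero, sub_zero, Real.norm_eq_abs] at h
  have h2 : x - Real.sin x ≤ (1 - Real.cos x) * x := by
    calc x - Real.sin x ≤ |x - Real.sin x| := le_abs_self _
      _ ≤ (1 - Real.cos x) * |x| := h
      _ = (1 - Real.cos x) * x := by rw [abs_of_nonneg hx]
  nlinarith [mul_le_mul_of_nonneg_right hcos hx]

theorem stmt4 (φ : SchwartzMap ℝ ℝ) (hφ_even : ∀ x : ℝ, φ (-x) = φ x)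
    (hφ_nonneg : ∀ x : ℝ, 0 ≤ φ x)
    (hhat_supp : ∀ k : ℝ, k ∉ Set.Icc (-1 : ℝ) 1 → fourierHat (fun x => φ x) k = 0) :
    (∀ l : ℕ, ∃ C : ℝ, 0 < C ∧ ∀ t : ℝ, 1 ≤ t → ∀ lam ∈ Set.Icc (0 : ℝ) 4,
      |(∑' n : ℤ, φ ((Real.arccos (1 - lam / 2) - 2 * Real.pi * n) * t))
          - φ (Real.sqrt lam * t)|
        ≤ C * t⁻¹ * ((1 + t ^ 2 * lam) ^ l)⁻¹) ∧
    (∀ lam : ℝ, 0 ≤ lam →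
      Tendsto (fun t : ℝ =>
          ∑' n : ℤ, φ ((Real.arccos (1 - (lam / t ^ 2) / 2) - 2 * Real.pi * n) * t))
        atTop (nhds (φ (Real.sqrt lam)))) := by
  have key : ∀ l : ℕ, ∃ C : ℝ, 0 < C ∧ ∀ t : ℝ, 1 ≤ t → ∀ lam ∈ Set.Icc (0 : ℝ) 4,
      |(∑' n : ℤ, φ ((Real.arccos (1 - lam / 2) - 2 * Real.pi * n) * t))
          - φ (Real.sqrt lam * t)|
        ≤ C * t⁻¹ * ((1 + t ^ 2 * lam) ^ l)⁻¹ := by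
    intro l
    obtain ⟨C₁, hC₁pos, hC₁⟩ := schwartz_decay_bound φ (2 * l + 3)
    obtain ⟨C₂, hC₂pos, hC₂⟩ := schwartz_decay_bound (SchwartzMap.derivCLM ℝ ℝ φ) (2 * l + 2)
    set S : ℝ := ∑' n : ℤ, ((n : ℝ) ^ 2)⁻¹ with hS
    have hSnn : 0 ≤ S := tsum_nonneg fun n => by positivity
    have hπ := Real.pi_pos
    have hπ1 := Real.pi_gt_three
    refine ⟨π ^ 3 / 32 * C₂ + 5 ^ l * C₁ * S + 1, by positivity, ?_⟩
    intro t ht lam hlam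
    obtain ⟨hlam0, hlam4⟩ := hlam
    have ht0 : (0 : ℝ) < t := lt_of_lt_of_le one_pos ht
    set θ : ℝ := Real.arccos (1 - lam / 2) with hθdef
    have hθ0 : 0 ≤ θ := Real.arccos_nonneg _
    have hθπ : θ ≤ π := Real.arccos_le_pi _
    have hcos : Real.cos θ = 1 - lam / 2 :=
      Real.cos_arccos (by linarith) (by linarith)
    have hsin0 : 0 ≤ Real.sin (θ / 2) :=
      Real.sin_nonneg_of_nonneg_of_le_pi (by linarith) (by linarith)
    have hcos2 : Real.cos θ = 1 - 2 * Real.sin (θ / 2) ^ 2 := by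
      have h2 := Real.cos_two_mul (θ / 2)
      have h3 := Real.sin_sq_add_cos_sq (θ / 2)
      have h4 : 2 * (θ / 2) = θ := by ring
      rw [h4] at h2; nlinarith
    have hlam_eq : lam = (2 * Real.sin (θ / 2)) ^ 2 := by nlinarith [hcos, hcos2]
    have hsqrt : Real.sqrt lam = 2 * Real.sin (θ / 2) := by
      rw [hlam_eq, Real.sqrt_sq (by linarith)]
    have hsl0 : 0 ≤ Real.sqrt lam := Real.sqrt_nonneg _
    have hθ_ge : Real.sqrt lam ≤ θ := by
      have := Real.sin_le (x := θ / 2) (by linarith)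
      rw [hsqrt]; linarith
    have hθ_le : θ ≤ π / 2 * Real.sqrt lam := by
      have h1 := Real.mul_le_sin (x := θ / 2) (by linarith) (by linarith)
      rw [hsqrt]
      have h2 : 2 / π * (θ / 2) = θ / π := by ring
      rw [h2] at h1
      rw [div_le_iff₀ hπ] at h1
      nlinarith
    have hδ : θ - Real.sqrt lam ≤ π ^ 3 / 32 * lam := by
      have h1 := sub_sin_le_cube (θ / 2) (by linarith) (by linarith)
      have hsqlam : Real.sqrt lam ^ 2 = lam := Real.sq_sqrt hlam0
      have hθsq : θ ^ 2 ≤ π ^ 2 / 4 * lam := by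
        have hmm := mul_self_le_mul_self hθ0 hθ_le
        nlinarith [hsqlam, hsl0]
      have h2 : θ - Real.sqrt lam ≤ θ ^ 3 / 8 := by rw [hsqrt]; nlinarith [h1]
      have e1 : θ * θ ^ 2 ≤ π * θ ^ 2 := mul_le_mul_of_nonneg_right hθπ (sq_nonneg θ)
      have e2 : π * θ ^ 2 ≤ π * (π ^ 2 / 4 * lam) := mul_le_mul_of_nonneg_left hθsq hπ.le
      nlinarith [e1, e2, h2]
    set A : ℝ := Real.sqrt lam * t with hAdef
    have hA0 : 0 ≤ A := mul_nonneg hsl0 ht0.le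
    have hA2 : A ^ 2 = t ^ 2 * lam := by
      rw [hAdef, mul_pow, Real.sq_sqrt hlam0]; ring
    set f : ℤ → ℝ := fun n => φ ((θ - 2 * π * n) * t) with hfdef
    set fb : ℤ → ℝ := fun n => if n = 0 then (0 : ℝ) else f n with hfbdef
    set D : ℝ := C₁ * (t ^ (2 * l + 3))⁻¹ with hDdef
    have hD0 : 0 ≤ D := by positivity
    -- bound on nonzero terms
    have hbound : ∀ n : ℤ, n ≠ 0 → |f n| ≤ D * ((n : ℝ) ^ 2)⁻¹ := by
      intro n hn
      have hn1 : (1 : ℝ) ≤ |(n : ℝ)| := by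
        have := Int.one_le_abs hn
        calc (1 : ℝ) = ((1 : ℤ) : ℝ) := by norm_num
          _ ≤ ((|n| : ℤ) : ℝ) := by exact_mod_cast this
          _ = |(n : ℝ)| := by push_cast; ring
      have hnR : ((n : ℝ)) ≠ 0 := by
        intro h; exact hn (by exact_mod_cast h)
      set x : ℝ := (θ - 2 * π * n) * t with hxdef
      have harg : |(n : ℝ)| * t ≤ |x| := by
        have h1 : 2 * π * |(n : ℝ)| - θ ≤ |θ - 2 * π * n| := by
          have h2 : |2 * π * (n : ℝ)| - |θ| ≤ |2 * π * (n : ℝ) - θ| :=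
            abs_sub_abs_le_abs_sub _ _
          rw [abs_sub_comm] at h2
          have h3 : |2 * π * (n : ℝ)| = 2 * π * |(n : ℝ)| := by
            rw [abs_mul, abs_of_nonneg (by linarith : (0:ℝ) ≤ 2 * π)]
          rw [h3, abs_of_nonneg hθ0] at h2
          linarith
        have h4 : |(n : ℝ)| ≤ 2 * π * |(n : ℝ)| - θ := by
          have hp1 : 3 * |(n : ℝ)| ≤ π * |(n : ℝ)| :=
            mul_le_mul_of_nonneg_right hπ1.le (abs_nonneg _)
          have hp2 : π * 1 ≤ π * |(n : ℝ)| := mul_le_mul_of_nonneg_left hn1 hπ.le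
          linarith [hθπ, hn1]
        have h5 : |x| = |θ - 2 * π * n| * t := by
          rw [hxdef, abs_mul, abs_of_pos ht0]
        rw [h5]
        exact mul_le_mul_of_nonneg_right (le_trans h4 h1) ht0.le
      have hpow : (n : ℝ) ^ 2 * t ^ (2 * l + 3) ≤ (1 + |x|) ^ (2 * l + 3) := by
        have h1 : |(n : ℝ)| * t ≤ 1 + |x| := by
          have := abs_nonneg x; linarith
        calc (n : ℝ) ^ 2 * t ^ (2 * l + 3)
            = |(n : ℝ)| ^ 2 * t ^ (2 * l + 3) := by rw [sq_abs]
          _ ≤ |(n : ℝ)| ^ (2 * l + 3) * t ^ (2 * l + 3) := by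
              have h2 : |(n : ℝ)| ^ 2 ≤ |(n : ℝ)| ^ (2 * l + 3) :=
                pow_le_pow_right₀ hn1 (by omega)
              exact mul_le_mul_of_nonneg_right h2 (by positivity)
          _ = (|(n : ℝ)| * t) ^ (2 * l + 3) := (mul_pow _ _ _).symm
          _ ≤ (1 + |x|) ^ (2 * l + 3) :=
              pow_le_pow_left₀ (by positivity) h1 _
      have hx1 : (0 : ℝ) < (1 + |x|) ^ (2 * l + 3) := by positivity
      have hnt : (0 : ℝ) < (n : ℝ) ^ 2 * t ^ (2 * l + 3) := by positivity
      have h6 : |φ x| ≤ C₁ / (1 + |x|) ^ (2 * l + 3) := by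
        rw [le_div_iff₀ hx1, mul_comm]; exact hC₁ x
      have h7 : C₁ / (1 + |x|) ^ (2 * l + 3) ≤ C₁ / ((n : ℝ) ^ 2 * t ^ (2 * l + 3)) :=
        div_le_div_of_nonneg_left hC₁pos.le hnt hpow
      have h8 : C₁ / ((n : ℝ) ^ 2 * t ^ (2 * l + 3)) = D * ((n : ℝ) ^ 2)⁻¹ := by
        rw [hDdef, div_eq_mul_inv, mul_inv]; ring
      have : |f n| = |φ x| := by rw [hfdef, hxdef]
      rw [this]; rw [h8] at h7; exact le_trans h6 h7
    have hboundfb : ∀ n : ℤ, |fb n| ≤ D * ((n : ℝ) ^ 2)⁻¹ := by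
      intro n
      by_cases h : n = 0
      · simp [hfbdef, h]
      · simp only [hfbdef, if_neg h]; exact hbound n h
    have hsum2 : Summable (fun n : ℤ => ((n : ℝ) ^ 2)⁻¹) := by
      simpa [one_div] using (summable_one_div_int_pow (p := 2)).2 one_lt_two
    have hsumD : Summable (fun n : ℤ => D * ((n : ℝ) ^ 2)⁻¹) := hsum2.mul_left D
    have hsumfb : Summable fb :=
      Summable.of_norm_bounded hsumD (by simpa [Real.norm_eq_abs] using hboundfb)
    have hsumabsfb : Summable (fun n : ℤ => |fb n|) :=
      Summable.of_nonneg_of_le (fun n => abs_nonneg _) hboundfb hsumD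
    have hsumf : Summable f := by
      have heq : f = fun n => fb n + (if n = 0 then f 0 else 0) := by
        funext n; by_cases h : n = 0 <;> simp [hfbdef, h]
      rw [heq]
      exact hsumfb.add (summable_of_ne_finset_zero (s := ({0} : Finset ℤ))
        (fun n hn => by simp only [Finset.mem_singleton] at hn; simp [hn]))
    have htsum : (∑' n : ℤ, f n) = f 0 + ∑' n : ℤ, fb n := by
      simpa [hfbdef] using Summable.tsum_eq_add_tsum_ite hsumf 0
    have htail : |∑' n : ℤ, fb n| ≤ D * S := by
      have h1 : |∑' n : ℤ, fb n| ≤ ∑' n : ℤ, |fb n| := by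
        simpa [Real.norm_eq_abs] using
          norm_tsum_le_tsum_norm (f := fb) (by simpa [Real.norm_eq_abs] using hsumabsfb)
      have h2 : (∑' n : ℤ, |fb n|) ≤ ∑' n : ℤ, D * ((n : ℝ) ^ 2)⁻¹ :=
        Summable.tsum_le_tsum hboundfb hsumabsfb hsumD
      have h3 : (∑' n : ℤ, D * ((n : ℝ) ^ 2)⁻¹) = D * S := tsum_mul_left
      linarith
    have hf0 : f 0 = φ (θ * t) := by simp [hfdef]
    -- mean value estimate for the main term
    have hmain : |φ (θ * t) - φ (Real.sqrt lam * t)|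
        ≤ C₂ * ((1 + A) ^ (2 * l + 2))⁻¹ * ((θ - Real.sqrt lam) * t) := by
      have hconv : Convex ℝ (Set.Icc (Real.sqrt lam * t) (θ * t)) := convex_Icc _ _
      have hdiff : ∀ x ∈ Set.Icc (Real.sqrt lam * t) (θ * t),
          DifferentiableAt ℝ (fun y => φ y) x := fun x _ => φ.differentiable x
      have hbd : ∀ x ∈ Set.Icc (Real.sqrt lam * t) (θ * t),
          ‖deriv (fun y => φ y) x‖ ≤ C₂ * ((1 + A) ^ (2 * l + 2))⁻¹ := by
        intro x hx
        have hxA : A ≤ x := hx.1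
        have hx0 : 0 ≤ x := le_trans hA0 hxA
        have h1 := hC₂ x
        rw [SchwartzMap.derivCLM_apply] at h1
        have hpos1 : (0 : ℝ) < (1 + |x|) ^ (2 * l + 2) := by positivity
        have hpos2 : (0 : ℝ) < (1 + A) ^ (2 * l + 2) := by positivity
        have h2 : |deriv (fun y => φ y) x| ≤ C₂ / (1 + |x|) ^ (2 * l + 2) := by
          rw [le_div_iff₀ hpos1, mul_comm]; exact h1
        have h3 : (1 + A) ^ (2 * l + 2) ≤ (1 + |x|) ^ (2 * l + 2) := by
          apply pow_le_pow_left₀ (by positivity)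
          rw [abs_of_nonneg hx0]; linarith
        have h4 : C₂ / (1 + |x|) ^ (2 * l + 2) ≤ C₂ / (1 + A) ^ (2 * l + 2) :=
          div_le_div_of_nonneg_left hC₂pos.le hpos2 h3
        rw [Real.norm_eq_abs]
        calc |deriv (fun y => φ y) x| ≤ C₂ / (1 + |x|) ^ (2 * l + 2) := h2
          _ ≤ C₂ / (1 + A) ^ (2 * l + 2) := h4
          _ = C₂ * ((1 + A) ^ (2 * l + 2))⁻¹ := div_eq_mul_inv _ _
      have hmem1 : Real.sqrt lam * t ∈ Set.Icc (Real.sqrt lam * t) (θ * t) :=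
        Set.left_mem_Icc.2 (mul_le_mul_of_nonneg_right hθ_ge ht0.le)
      have hmem2 : θ * t ∈ Set.Icc (Real.sqrt lam * t) (θ * t) :=
        Set.right_mem_Icc.2 (mul_le_mul_of_nonneg_right hθ_ge ht0.le)
      have h := hconv.norm_image_sub_le_of_norm_deriv_le hdiff hbd hmem1 hmem2
      simp only [Real.norm_eq_abs] at h
      have habs : |θ * t - Real.sqrt lam * t| = (θ - Real.sqrt lam) * t := by
        rw [abs_of_nonneg (by nlinarith)]; ring
      rw [habs] at h
      exact h
    -- the two key inequalities
    have hPpos : (0 : ℝ) < (1 + t ^ 2 * lam) ^ l := by positivity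
    have h1A : (0 : ℝ) < 1 + A := by linarith
    have hkey1 : (lam * t) / (1 + A) ^ (2 * l + 2) ≤ 1 / (t * (1 + t ^ 2 * lam) ^ l) := by
      rw [div_le_div_iff₀ (by positivity) (by positivity)]
      have e2 : (1 + t ^ 2 * lam) ^ l ≤ (1 + A) ^ (2 * l) := by
        rw [pow_mul]
        exact pow_le_pow_left₀ (by positivity) (by linarith [hA2, hA0, sq_nonneg A]) l
      have e3 : A ^ 2 * (1 + A) ^ (2 * l) ≤ (1 + A) ^ (2 * l + 2) := by
        rw [pow_add]
        have h2 : A ^ 2 ≤ (1 + A) ^ 2 := by nlinarith [hA0]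
        calc A ^ 2 * (1 + A) ^ (2 * l) = (1 + A) ^ (2 * l) * A ^ 2 := by ring
          _ ≤ (1 + A) ^ (2 * l) * (1 + A) ^ 2 :=
            mul_le_mul_of_nonneg_left h2 (by positivity)
      calc lam * t * (t * (1 + t ^ 2 * lam) ^ l)
          = A ^ 2 * (1 + t ^ 2 * lam) ^ l := by rw [hA2]; ring
        _ ≤ A ^ 2 * (1 + A) ^ (2 * l) :=
            mul_le_mul_of_nonneg_left e2 (sq_nonneg A)
        _ ≤ (1 + A) ^ (2 * l + 2) := e3
        _ = 1 * (1 + A) ^ (2 * l + 2) := (one_mul _).symm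
    have hkey2 : 1 / t ^ (2 * l + 3) ≤ 5 ^ l / (t * (1 + t ^ 2 * lam) ^ l) := by
      rw [div_le_div_iff₀ (by positivity) (by positivity)]
      have e4 : (1 + t ^ 2 * lam) ^ l ≤ 5 ^ l * t ^ (2 * l) := by
        calc (1 + t ^ 2 * lam) ^ l ≤ (5 * t ^ 2) ^ l :=
            pow_le_pow_left₀ (by positivity)
              (by nlinarith [mul_le_mul_of_nonneg_left hlam4 (sq_nonneg t),
                mul_le_mul ht ht (by norm_num) (by linarith : (0:ℝ) ≤ t)]) l
          _ = 5 ^ l * t ^ (2 * l) := by rw [mul_pow, ← pow_mul]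
      have ht2 : t ^ (2 * l + 1) ≤ t ^ (2 * l + 3) := pow_le_pow_right₀ ht (by omega)
      calc 1 * (t * (1 + t ^ 2 * lam) ^ l) = t * (1 + t ^ 2 * lam) ^ l := one_mul _
        _ ≤ t * (5 ^ l * t ^ (2 * l)) :=
            mul_le_mul_of_nonneg_left e4 ht0.le
        _ = 5 ^ l * t ^ (2 * l + 1) := by rw [pow_succ]; ring
        _ ≤ 5 ^ l * t ^ (2 * l + 3) := mul_le_mul_of_nonneg_left ht2 (by positivity)
    -- assemble
    have hmain2 : |φ (θ * t) - φ (Real.sqrt lam * t)|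
        ≤ (π ^ 3 / 32 * C₂) * t⁻¹ * ((1 + t ^ 2 * lam) ^ l)⁻¹ := by
      calc |φ (θ * t) - φ (Real.sqrt lam * t)|
          ≤ C₂ * ((1 + A) ^ (2 * l + 2))⁻¹ * ((θ - Real.sqrt lam) * t) := hmain
        _ ≤ C₂ * ((1 + A) ^ (2 * l + 2))⁻¹ * (π ^ 3 / 32 * lam * t) := by
            apply mul_le_mul_of_nonneg_left _ (by positivity)
            exact mul_le_mul_of_nonneg_right hδ ht0.le
        _ = (π ^ 3 / 32 * C₂) * ((lam * t) / (1 + A) ^ (2 * l + 2)) := by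
            rw [div_eq_mul_inv]; ring
        _ ≤ (π ^ 3 / 32 * C₂) * (1 / (t * (1 + t ^ 2 * lam) ^ l)) :=
            mul_le_mul_of_nonneg_left hkey1 (by positivity)
        _ = (π ^ 3 / 32 * C₂) * t⁻¹ * ((1 + t ^ 2 * lam) ^ l)⁻¹ := by
            rw [one_div, mul_inv]; ring
    have htail2 : D * S ≤ (5 ^ l * C₁ * S) * t⁻¹ * ((1 + t ^ 2 * lam) ^ l)⁻¹ := by
      calc D * S = (C₁ * S) * (1 / t ^ (2 * l + 3)) := by
            rw [hDdef, one_div]; ring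
        _ ≤ (C₁ * S) * (5 ^ l / (t * (1 + t ^ 2 * lam) ^ l)) :=
            mul_le_mul_of_nonneg_left hkey2 (by positivity)
        _ = (5 ^ l * C₁ * S) * t⁻¹ * ((1 + t ^ 2 * lam) ^ l)⁻¹ := by
            rw [div_eq_mul_inv, mul_inv]; ring
    have hfingoal : (∑' n : ℤ, φ ((θ - 2 * π * n) * t)) = ∑' n : ℤ, f n := rfl
    rw [hfingoal, htsum, hf0]
    have hstep : |φ (θ * t) + (∑' n : ℤ, fb n) - φ (Real.sqrt lam * t)|
        ≤ |φ (θ * t) - φ (Real.sqrt lam * t)| + |∑' n : ℤ, fb n| := by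
      have := abs_add_le (φ (θ * t) - φ (Real.sqrt lam * t)) (∑' n : ℤ, fb n)
      have heq : φ (θ * t) + (∑' n : ℤ, fb n) - φ (Real.sqrt lam * t)
          = (φ (θ * t) - φ (Real.sqrt lam * t)) + (∑' n : ℤ, fb n) := by ring
      rw [heq]; exact this
    have hpos : (0 : ℝ) ≤ t⁻¹ * ((1 + t ^ 2 * lam) ^ l)⁻¹ := by positivity
    calc |φ (θ * t) + (∑' n : ℤ, fb n) - φ (Real.sqrt lam * t)|
        ≤ |φ (θ * t) - φ (Real.sqrt lam * t)| + |∑' n : ℤ, fb n| := hstep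
      _ ≤ (π ^ 3 / 32 * C₂) * t⁻¹ * ((1 + t ^ 2 * lam) ^ l)⁻¹
          + (5 ^ l * C₁ * S) * t⁻¹ * ((1 + t ^ 2 * lam) ^ l)⁻¹ := by
          have := le_trans htail htail2
          linarith [hmain2]
      _ ≤ (π ^ 3 / 32 * C₂ + 5 ^ l * C₁ * S + 1) * t⁻¹ * ((1 + t ^ 2 * lam) ^ l)⁻¹ := by
          have hexp : (π ^ 3 / 32 * C₂ + 5 ^ l * C₁ * S + 1) * t⁻¹ * ((1 + t ^ 2 * lam) ^ l)⁻¹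
              = (π ^ 3 / 32 * C₂) * t⁻¹ * ((1 + t ^ 2 * lam) ^ l)⁻¹
                + (5 ^ l * C₁ * S) * t⁻¹ * ((1 + t ^ 2 * lam) ^ l)⁻¹
                + t⁻¹ * ((1 + t ^ 2 * lam) ^ l)⁻¹ := by ring
          linarith [hpos]
  refine ⟨key, ?_⟩
  intro lam hlam
  obtain ⟨C, hCpos, hC⟩ := key 0
  have hslnn : 0 ≤ Real.sqrt lam := Real.sqrt_nonneg _
  have hev : ∀ᶠ t : ℝ in atTop,
      ‖(∑' n : ℤ, φ ((Real.arccos (1 - (lam / t ^ 2) / 2) - 2 * Real.pi * n) * t))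
        - φ (Real.sqrt lam)‖ ≤ C * t⁻¹ := by
    filter_upwards [eventually_ge_atTop (1 + Real.sqrt lam)] with t ht
    have ht1 : (1 : ℝ) ≤ t := by linarith
    have ht0 : (0 : ℝ) < t := lt_of_lt_of_le one_pos ht1
    have hmem : lam / t ^ 2 ∈ Set.Icc (0 : ℝ) 4 := by
      constructor
      · positivity
      · rw [div_le_iff₀ (by positivity)]
        nlinarith [Real.sq_sqrt hlam]
    have h := hC t ht1 (lam / t ^ 2) hmem
    simp only [pow_zero, inv_one, mul_one] at h
    have hs : Real.sqrt (lam / t ^ 2) * t = Real.sqrt lam := by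
      rw [show lam / t ^ 2 = (Real.sqrt lam / t) ^ 2 by
        rw [div_pow, Real.sq_sqrt hlam]]
      rw [Real.sqrt_sq (by positivity)]
      field_simp
    rw [hs] at h
    simpa [Real.norm_eq_abs] using h
  have hlim : Tendsto (fun t : ℝ => C * t⁻¹) atTop (nhds 0) := by
    simpa using tendsto_inv_atTop_zero.const_mul C
  have h0 : Tendsto (fun t : ℝ =>
      (∑' n : ℤ, φ ((Real.arccos (1 - (lam / t ^ 2) / 2) - 2 * Real.pi * n) * t))
        - φ (Real.sqrt lam)) atTop (nhds 0) :=
    squeeze_zero_norm' hev hlim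
  simpa using h0.add_const (φ (Real.sqrt lam))
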